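/- Let S be a convex cost process and D a convex portfolio constraint process, and let C be the set of claim processes superhedgeable with zero cost. Assume that for each t = 0,…,T, almost surely D_t^∞(ω) ∩ {x ∈ ℝ^J | S_t^∞(x,ω) ≤ 0} = {0}, where D_t^∞(ω) := ⋂_{α>0} α·D_t(ω) is the recession cone of D_t(ω) and S_t^∞(x,ω) := sup_{α>0} α·S_t(x/α, ω) is the recession function of S_t(·,ω). Then C is closed in probability. -/

import Mathlib

open MeasureTheory Filter
open scoped Pointwise

noncomputable section

/-- The portfolio held before time `t`, with the convention `x₋₁ = 0`. -/
def prevP {Ω : Type*} {T : ℕ} {E : Type*} [Zero E]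
    (x : Fin (T + 1) → Ω → E) (t : Fin (T + 1)) : Ω → E :=
  if t.1 = 0 then 0 else x ⟨t.1 - 1, lt_of_le_of_lt (Nat.sub_le _ _) t.isLt⟩

/-- The recession cone of a set in a real vector space. -/
def rcone {V : Type*} [AddCommMonoid V] [SMul ℝ V] (A : Set V) : Set V :=
  {y | ∀ a ∈ A, ∀ α : ℝ, 0 < α → a + α • y ∈ A}

variable {Ω : Type*} {m0 : MeasurableSpace Ω} {T : ℕ} {J : Type*} [Fintype J]

/-- A convex cost process: `S t · ω` is convex, lsc, vanishes at `0`, never `-∞`, and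
`S t` is `B(ℝ^J) ⊗ ℱ t`-measurable. -/
structure CostProcess (ℱ : Filtration (Fin (T + 1)) m0) (J : Type*) [Fintype J] where
  S : Fin (T + 1) → (J → ℝ) → Ω → EReal
  ne_bot : ∀ t x ω, S t x ω ≠ ⊥
  convex : ∀ t ω (x y : J → ℝ) (a b : ℝ), 0 ≤ a → 0 ≤ b → a + b = 1 →
    S t (a • x + b • y) ω ≤ (a : EReal) * S t x ω + (b : EReal) * S t y ω
  lsc : ∀ t ω, LowerSemicontinuous fun x => S t x ω
  zero : ∀ t ω, S t 0 ω = 0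
  meas : ∀ t, Measurable[(inferInstance : MeasurableSpace (J → ℝ)).prod (ℱ t)]
    fun p : (J → ℝ) × Ω => S t p.1 p.2

/-- A convex portfolio constraint process: each `D t ω` is closed, convex, contains `0`,
and `ω ↦ D t ω` is `ℱ t`-measurable. -/
structure ConstraintProcess (ℱ : Filtration (Fin (T + 1)) m0) (J : Type*) [Fintype J] where
  D : Fin (T + 1) → Ω → Set (J → ℝ)
  closed : ∀ t ω, IsClosed (D t ω)
  convex : ∀ t ω, Convex ℝ (D t ω)
  zero_mem : ∀ t ω, (0 : J → ℝ) ∈ D t ω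
  meas : ∀ t (U : Set (J → ℝ)), IsOpen U →
    MeasurableSet[ℱ t] {ω | (D t ω ∩ U).Nonempty}

/-- The set `M` of adapted claim processes. -/
def ClaimM (ℱ : Filtration (Fin (T + 1)) m0) : Set (Fin (T + 1) → Ω → ℝ) :=
  {c | Adapted ℱ c}

/-- The set `M₋` of almost surely nonpositive claim processes. -/
def Mminus (P : Measure Ω) (ℱ : Filtration (Fin (T + 1)) m0) :
    Set (Fin (T + 1) → Ω → ℝ) :=
  {c | c ∈ ClaimM ℱ ∧ ∀ t, ∀ᵐ ω ∂P, c t ω ≤ 0}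

/-- The set `C` of claim processes superhedgeable with zero cost. -/
def Cset (P : Measure Ω) (ℱ : Filtration (Fin (T + 1)) m0)
    (S : CostProcess ℱ J) (D : ConstraintProcess ℱ J) :
    Set (Fin (T + 1) → Ω → ℝ) :=
  {c | c ∈ ClaimM ℱ ∧ ∃ x : Fin (T + 1) → Ω → (J → ℝ), Adapted ℱ x ∧
    x (Fin.last T) = 0 ∧
    ∀ᵐ ω ∂P, ∀ t, x t ω ∈ D.D t ω ∧
      S.S t (x t ω - prevP x t ω) ω + (c t ω : EReal) ≤ 0}

/-- The set `M¹` of integrable claim processes. -/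
def M1 (P : Measure Ω) (ℱ : Filtration (Fin (T + 1)) m0) :
    Set (Fin (T + 1) → Ω → ℝ) :=
  {c | c ∈ ClaimM ℱ ∧ ∀ t, Integrable (c t) P}

/-- The set `M^∞` of essentially bounded claim processes. -/
def Minf (P : Measure Ω) (ℱ : Filtration (Fin (T + 1)) m0) :
    Set (Fin (T + 1) → Ω → ℝ) :=
  {c | c ∈ ClaimM ℱ ∧ ∀ t, MemLp (c t) ⊤ P}

/-- The bilinear pairing `E ∑ₜ cₜ yₜ`. -/
def pairing (P : Measure Ω) (c y : Fin (T + 1) → Ω → ℝ) : ℝ :=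
  ∫ ω, ∑ t, c t ω * y t ω ∂P

/-- The support function `σ_{C¹}(y) = sup_{c ∈ C¹} E ∑ₜ cₜ yₜ` of a set of integrable
claim processes. -/
def sigmaSup (P : Measure Ω) (A : Set (Fin (T + 1) → Ω → ℝ))
    (y : Fin (T + 1) → Ω → ℝ) : EReal :=
  sSup ((fun c => ((pairing P c y : ℝ) : EReal)) '' A)

/-- `A` is closed in probability (within the space `M` of adapted claim processes). -/
def ClosedInProb (P : Measure Ω) (ℱ : Filtration (Fin (T + 1)) m0)
    (A : Set (Fin (T + 1) → Ω → ℝ)) : Prop :=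
  ∀ cs : ℕ → Fin (T + 1) → Ω → ℝ, (∀ n, cs n ∈ A) →
    ∀ c ∈ ClaimM ℱ, (∀ t, TendstoInMeasure P (fun n => cs n t) atTop (c t)) → c ∈ A

section AuxLemmas

open Set
open scoped Topology

private lemma measurable_comp_nat {α : Type*} {G : MeasurableSpace Ω} [MeasurableSpace α]
    {g : Ω → ℕ} (hg : Measurable[G] g) {f : ℕ → Ω → α} (hf : ∀ n, Measurable[G] (f n)) :
    Measurable[G] fun ω => f (g ω) ω := by
  intro s hs
  have h : (fun ω => f (g ω) ω) ⁻¹' s = ⋃ n, g ⁻¹' {n} ∩ f n ⁻¹' s := by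
    ext ω; simp
  rw [h]
  exact MeasurableSet.iUnion fun n => (hg (measurableSet_singleton n)).inter (hf n hs)

private lemma lsc_le_liminf {X : Type*} [TopologicalSpace X]
    {g : X → EReal} (hg : LowerSemicontinuous g) {v : ℕ → X} {x : X}
    (hv : Filter.Tendsto v atTop (𝓝 x)) : g x ≤ liminf (fun k => g (v k)) atTop := by
  refine (le_liminf_iff ?_ ?_).2 (fun y hy => hv.eventually (hg x y hy)) <;> isBoundedDefault

private lemma ereal_le_neg_of_add_le {a : EReal} {c : ℝ} (h : a + (c : EReal) ≤ 0) :
    a ≤ ((-c : ℝ) : EReal) := by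
  have h2 := add_le_add_left h ((-c : ℝ) : EReal)
  rwa [add_assoc, ← EReal.coe_add, add_neg_cancel, EReal.coe_zero, add_zero, zero_add] at h2

private lemma exists_random_subseq_real {G : MeasurableSpace Ω}
    (f : ℕ → Ω → ℝ) (hf : ∀ n, Measurable[G] (f n)) :
    ∃ σ : ℕ → Ω → ℕ, (∀ k, Measurable[G] (σ k)) ∧ (∀ ω, StrictMono fun k => σ k ω) ∧
      ∀ ω, BddAbove (Set.range fun n => |f n ω|) →
        ∃ L, Tendsto (fun k => f (σ k ω) ω) atTop (𝓝 L) := by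
  classical
  set ℓ : Ω → ℝ := fun ω => (liminf (fun n => ((f n ω : EReal))) atTop).toReal with hℓ
  have hℓm : Measurable[G] ℓ :=
    measurable_ereal_toReal.comp
      (Measurable.liminf fun n => measurable_coe_real_ereal.comp (hf n))
  set B : Set Ω := {ω | ∀ k m : ℕ, ∃ n, m ≤ n ∧ |f n ω - ℓ ω| < (2:ℝ)⁻¹ ^ k} with hB
  have hBm : MeasurableSet[G] B := by
    have h : B = ⋂ k, ⋂ m, ⋃ n, ⋃ (_ : m ≤ n), {ω | |f n ω - ℓ ω| < (2:ℝ)⁻¹ ^ k} := by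
      ext ω; simp only [hB, Set.mem_setOf_eq, Set.mem_iInter, Set.mem_iUnion, exists_prop]
    rw [h]
    refine MeasurableSet.iInter fun k => MeasurableSet.iInter fun m =>
      MeasurableSet.iUnion fun n => MeasurableSet.iUnion fun _ => ?_
    exact measurableSet_lt ((hf n).sub hℓm).abs measurable_const
  have hbd : ∀ ω, BddAbove (Set.range fun n => |f n ω|) → ω ∈ B := by
    rintro ω ⟨M, hM⟩
    have hM' : ∀ n, |f n ω| ≤ M := fun n => hM ⟨n, rfl⟩
    set L := liminf (fun n => ((f n ω : EReal))) atTop with hL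
    have h1 : L ≤ (M : EReal) :=
      liminf_le_of_frequently_le (Frequently.of_forall fun n => by
        exact_mod_cast (abs_le.1 (hM' n)).2)
    have h2 : ((-M : ℝ) : EReal) ≤ L :=
      le_liminf_of_le (by isBoundedDefault) (Eventually.of_forall fun n => by
        exact_mod_cast (abs_le.1 (hM' n)).1)
    have hT : L ≠ ⊤ := (lt_of_le_of_lt h1 (EReal.coe_lt_top M)).ne
    have hBot : L ≠ ⊥ := (lt_of_lt_of_le (EReal.bot_lt_coe _) h2).ne'
    have hcoe : ((ℓ ω : ℝ) : EReal) = L := EReal.coe_toReal hT hBot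
    intro k m
    have hε : (0:ℝ) < (2:ℝ)⁻¹ ^ k := by positivity
    have hfreq : ∃ᶠ n in atTop, f n ω < ℓ ω + (2:ℝ)⁻¹ ^ k := by
      have : L < ((ℓ ω + (2:ℝ)⁻¹ ^ k : ℝ) : EReal) := by
        rw [← hcoe]; exact_mod_cast (lt_add_of_pos_right _ hε)
      exact (frequently_lt_of_liminf_lt (by isBoundedDefault) this).mono
        fun n hn => by exact_mod_cast hn
    have hev : ∀ᶠ n in atTop, ℓ ω - (2:ℝ)⁻¹ ^ k < f n ω := by
      have : ((ℓ ω - (2:ℝ)⁻¹ ^ k : ℝ) : EReal) < L := by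
        rw [← hcoe]; exact_mod_cast (sub_lt_self _ hε)
      exact (eventually_lt_of_lt_liminf this (by isBoundedDefault)).mono
        fun n hn => by exact_mod_cast hn
    obtain ⟨n, ⟨hn1, hn2⟩, hn3⟩ :=
      ((hfreq.and_eventually hev).and_eventually (eventually_ge_atTop m)).exists
    exact ⟨n, hn3, abs_sub_lt_iff.2 ⟨by linarith, by linarith⟩⟩
  -- the recursive subsequence
  set q : ℕ → (Ω → ℕ) → Ω → ℕ → Prop := fun k prev ω n =>
    (ω ∈ B ∧ prev ω < n ∧ |f n ω - ℓ ω| < (2:ℝ)⁻¹ ^ k) ∨ (ω ∉ B ∧ n = prev ω + 1) with hq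
  have qex : ∀ k prev ω, ∃ n, q k prev ω n := by
    intro k prev ω
    by_cases h : ω ∈ B
    · obtain ⟨n, hn, hn2⟩ := h k (prev ω + 1)
      exact ⟨n, Or.inl ⟨h, by omega, hn2⟩⟩
    · exact ⟨prev ω + 1, Or.inr ⟨h, rfl⟩⟩
  have qmeas : ∀ k (prev : Ω → ℕ), Measurable[G] prev → ∀ n,
      MeasurableSet[G] {ω | q k prev ω n} := by
    intro k prev hprev n
    have h1 : MeasurableSet[G] {ω | prev ω < n} :=
      hprev (measurableSet_lt measurable_id measurable_const : MeasurableSet {m : ℕ | m < n})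
    have h2 : MeasurableSet[G] {ω | |f n ω - ℓ ω| < (2:ℝ)⁻¹ ^ k} :=
      measurableSet_lt ((hf n).sub hℓm).abs measurable_const
    have h3 : MeasurableSet[G] {ω | n = prev ω + 1} :=
      hprev (show MeasurableSet {m : ℕ | n = m + 1} from trivial)
    have h4 : {ω | q k prev ω n} =
        (B ∩ {ω | prev ω < n} ∩ {ω | |f n ω - ℓ ω| < (2:ℝ)⁻¹ ^ k}) ∪
          (Bᶜ ∩ {ω | n = prev ω + 1}) := by
      ext ω
      simp only [hq, Set.mem_setOf_eq, Set.mem_union, Set.mem_inter_iff, Set.mem_compl_iff]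
      tauto
    rw [h4]
    exact ((hBm.inter h1).inter h2).union (hBm.compl.inter h3)
  set step : ℕ → (prev : Ω → ℕ) → Ω → ℕ := fun k prev ω => Nat.find (qex k prev ω) with hstep
  have step_meas : ∀ k (prev : Ω → ℕ), Measurable[G] prev → Measurable[G] (step k prev) :=
    fun k prev hprev => measurable_find _ (qmeas k prev hprev)
  have step_spec : ∀ k prev ω, q k prev ω (step k prev ω) :=
    fun k prev ω => Nat.find_spec (qex k prev ω)
  have step_gt : ∀ k prev ω, prev ω < step k prev ω := by
    intro k prev ω
    rcases step_spec k prev ω with h | h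
    · exact h.2.1
    · omega
  set σ : ℕ → Ω → ℕ :=
    fun k => Nat.rec (step 0 fun _ => 0) (fun k prev => step (k+1) prev) k with hσ
  have σmeas : ∀ k, Measurable[G] (σ k) := by
    intro k; induction k with
    | zero => exact step_meas 0 _ measurable_const
    | succ k ih => exact step_meas (k+1) _ ih
  have σmono : ∀ ω, StrictMono fun k => σ k ω := by
    intro ω
    apply strictMono_nat_of_lt_succ
    intro k; exact step_gt (k+1) (σ k) ω
  have σclose : ∀ ω ∈ B, ∀ k, |f (σ k ω) ω - ℓ ω| < (2:ℝ)⁻¹ ^ k := by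
    intro ω hω k
    have h : q k (if h : k = 0 then (fun _ => 0) else σ (k-1)) ω (σ k ω) := by
      cases k with
      | zero => simpa [hσ] using step_spec 0 (fun _ => 0) ω
      | succ k => simpa using step_spec (k+1) (σ k) ω
    rcases h with h | h
    · exact h.2.2
    · exact absurd hω h.1
  refine ⟨σ, σmeas, σmono, fun ω hbdd => ?_⟩
  have hωB := hbd ω hbdd
  refine ⟨ℓ ω, ?_⟩
  have hpow : Tendsto (fun k : ℕ => (2:ℝ)⁻¹ ^ k) atTop (𝓝 0) :=
    tendsto_pow_atTop_nhds_zero_of_lt_one (by norm_num) (by norm_num)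
  have h0 : Tendsto (fun k => f (σ k ω) ω - ℓ ω) atTop (𝓝 0) := by
    refine squeeze_zero_norm (fun k => le_of_lt ?_) hpow
    simpa [Real.norm_eq_abs] using σclose ω hωB k
  have := h0.add_const (ℓ ω)
  simpa using this

private lemma exists_random_subseq_pi {G : MeasurableSpace Ω}
    (f : ℕ → Ω → (J → ℝ)) (hf : ∀ n, Measurable[G] (f n)) :
    ∃ σ : ℕ → Ω → ℕ, (∀ k, Measurable[G] (σ k)) ∧ (∀ ω, StrictMono fun k => σ k ω) ∧
      ∀ ω, BddAbove (Set.range fun n => ‖f n ω‖) →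
        ∃ L, Tendsto (fun k => f (σ k ω) ω) atTop (𝓝 L) := by
  classical
  have main : ∀ s : Finset J, ∃ σ : ℕ → Ω → ℕ,
      (∀ k, Measurable[G] (σ k)) ∧ (∀ ω, StrictMono fun k => σ k ω) ∧
      ∀ ω, BddAbove (Set.range fun n => ‖f n ω‖) → ∀ j ∈ s,
        ∃ L, Tendsto (fun k => f (σ k ω) ω j) atTop (𝓝 L) := by
    intro s
    induction s using Finset.induction_on with
    | empty =>
      exact ⟨fun k _ => k, fun k => measurable_const, fun ω => strictMono_id,
        fun ω _ j hj => absurd hj (Finset.notMem_empty j)⟩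
    | insert a s ha ih =>
      obtain ⟨σ, hm, hsm, hconv⟩ := ih
      obtain ⟨σ', hm', hsm', hconv'⟩ := exists_random_subseq_real
        (fun n ω => f (σ n ω) ω a)
        (fun n => (measurable_pi_apply a).comp (measurable_comp_nat (hm n) hf))
      refine ⟨fun k ω => σ (σ' k ω) ω,
        fun k => measurable_comp_nat (hm' k) hm,
        fun ω => (hsm ω).comp (hsm' ω), fun ω hbdd j hj => ?_⟩
      rcases Finset.mem_insert.1 hj with rfl | hj
      · refine hconv' ω ?_
        obtain ⟨M, hM⟩ := hbdd
        refine ⟨M, ?_⟩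
        rintro x ⟨n, rfl⟩
        calc |f (σ n ω) ω j| ≤ ‖f (σ n ω) ω‖ := by
              simpa [Real.norm_eq_abs] using norm_le_pi_norm (f (σ n ω) ω) j
          _ ≤ M := hM ⟨σ n ω, rfl⟩
      · obtain ⟨L, hL⟩ := hconv ω hbdd j hj
        exact ⟨L, hL.comp (hsm' ω).tendsto_atTop⟩
  obtain ⟨σ, hm, hsm, hconv⟩ := main Finset.univ
  refine ⟨σ, hm, hsm, fun ω hbdd => ?_⟩
  have h : ∀ j : J, ∃ L, Tendsto (fun k => f (σ k ω) ω j) atTop (𝓝 L) :=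
    fun j => hconv ω hbdd j (Finset.mem_univ j)
  exact ⟨fun j => (h j).choose, tendsto_pi_nhds.2 fun j => (h j).choose_spec⟩

private lemma bdd_of_rec
    (Dset : Set (J → ℝ)) (hDc : IsClosed Dset) (hDconv : Convex ℝ Dset)
    (hD0 : (0 : J → ℝ) ∈ Dset)
    (Sf : (J → ℝ) → EReal)
    (hSconv : ∀ (x y : J → ℝ) (a b : ℝ), 0 ≤ a → 0 ≤ b → a + b = 1 →
      Sf (a • x + b • y) ≤ (a : EReal) * Sf x + (b : EReal) * Sf y)
    (hSlsc : LowerSemicontinuous Sf) (hS0 : Sf 0 = 0)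
    (z p : ℕ → (J → ℝ)) (d : ℕ → ℝ)
    (hz : ∀ n, z n ∈ Dset)
    (hS : ∀ n, Sf (z n - p n) + (d n : EReal) ≤ 0)
    (hp : ∃ Mp, ∀ n, ‖p n‖ ≤ Mp)
    (hd : ∃ Md, ∀ n, |d n| ≤ Md)
    (hrec : (⋂ (α : ℝ) (_ : 0 < α), α • Dset) ∩
      {x : J → ℝ | (⨆ (α : ℝ) (_ : 0 < α), (α : EReal) * Sf (α⁻¹ • x)) ≤ 0} = {0}) :
    BddAbove (Set.range fun n => ‖z n‖) := by
  classical
  by_contra hub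
  obtain ⟨Mp, hMp⟩ := hp
  obtain ⟨Md, hMd⟩ := hd
  have hex : ∀ k : ℕ, ∃ n, (k : ℝ) < ‖z n‖ := by
    intro k
    obtain ⟨y, ⟨n, rfl⟩, hy⟩ := not_bddAbove_iff.1 hub (k : ℝ)
    exact ⟨n, hy⟩
  set φ : ℕ → ℕ := fun k => (hex k).choose with hφ
  have hφs : ∀ k : ℕ, (k : ℝ) < ‖z (φ k)‖ := fun k => (hex k).choose_spec
  set r : ℕ → ℝ := fun k => ‖z (φ k)‖ with hr
  have hrpos : ∀ k, 0 < r k := fun k => lt_of_le_of_lt (Nat.cast_nonneg k) (hφs k)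
  have hrtop : Tendsto r atTop atTop :=
    tendsto_atTop_mono (fun k => (hφs k).le) tendsto_natCast_atTop_atTop
  set u : ℕ → (J → ℝ) := fun k => (r k)⁻¹ • z (φ k) with hu
  have hunorm : ∀ k, ‖u k‖ = 1 := by
    intro k
    rw [hu]
    rw [norm_smul, norm_inv, Real.norm_eq_abs, abs_of_pos (hrpos k)]
    exact inv_mul_cancel₀ (hrpos k).ne'
  have humem : ∀ k, u k ∈ Metric.closedBall (0 : J → ℝ) 1 := fun k => by
    rw [Metric.mem_closedBall, dist_zero_right, hunorm k]
  obtain ⟨y, -, ψ, hψs, hψt⟩ :=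
    (isCompact_closedBall (0 : J → ℝ) 1).tendsto_subseq humem
  have hynorm : ‖y‖ = 1 := by
    have h1 : Tendsto (fun k => ‖u (ψ k)‖) atTop (𝓝 ‖y‖) :=
      (continuous_norm.tendsto y).comp hψt
    have h2 : Tendsto (fun k => ‖u (ψ k)‖) atTop (𝓝 1) := by
      simp only [hunorm]; exact tendsto_const_nhds
    exact tendsto_nhds_unique h1 h2
  set η : ℕ → ℕ := fun k => φ (ψ k) with hη
  set R : ℕ → ℝ := fun k => r (ψ k) with hR
  have hRpos : ∀ k, 0 < R k := fun k => hrpos (ψ k)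
  have hRtop : Tendsto R atTop atTop := hrtop.comp hψs.tendsto_atTop
  have hUten : Tendsto (fun k => (R k)⁻¹ • z (η k)) atTop (𝓝 y) := hψt
  have claimA : ∀ α : ℝ, 0 < α → y ∈ α • Dset := by
    intro α hα
    rw [Set.mem_smul_set_iff_inv_smul_mem₀ hα.ne']
    have hmem : ∀ᶠ k in atTop, α⁻¹ • ((R k)⁻¹ • z (η k)) ∈ Dset := by
      filter_upwards [hRtop.eventually_ge_atTop α⁻¹] with k hk
      have hlpos : 0 < α⁻¹ * (R k)⁻¹ := mul_pos (inv_pos.2 hα) (inv_pos.2 (hRpos k))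
      have hlle : α⁻¹ * (R k)⁻¹ ≤ 1 := by
        rw [← div_eq_mul_inv]
        exact div_le_one_of_le₀ hk (hRpos k).le
      have := hDconv (hz (η k)) hD0 hlpos.le (by linarith : (0:ℝ) ≤ 1 - (α⁻¹ * (R k)⁻¹))
        (by ring)
      rw [smul_zero, add_zero] at this
      rwa [smul_smul]
    exact hDc.mem_of_tendsto (hUten.const_smul α⁻¹) hmem
  have claimB : ∀ β : ℝ, 0 < β → Sf (β • y) ≤ 0 := by
    intro β hβ
    set lam : ℕ → ℝ := fun k => β / R k with hlam
    have hlampos : ∀ k, 0 < lam k := fun k => div_pos hβ (hRpos k)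
    have hlam0 : Tendsto lam atTop (𝓝 0) :=
      Tendsto.div_atTop tendsto_const_nhds hRtop
    have hlamle : ∀ᶠ k in atTop, lam k ≤ 1 := by
      filter_upwards [hRtop.eventually_ge_atTop β] with k hk
      exact div_le_one_of_le₀ hk (hRpos k).le
    set v : ℕ → (J → ℝ) := fun k => z (η k) - p (η k) with hv
    have hvten : Tendsto (fun k => lam k • v k) atTop (𝓝 (β • y)) := by
      have h1 : ∀ k, lam k • v k = β • ((R k)⁻¹ • z (η k)) - lam k • p (η k) := by
        intro k
        simp only [hv, hlam, smul_sub, smul_smul, div_eq_mul_inv]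
      simp only [h1]
      have h2 : Tendsto (fun k => β • ((R k)⁻¹ • z (η k))) atTop (𝓝 (β • y)) :=
        hUten.const_smul β
      have h3 : Tendsto (fun k => lam k • p (η k)) atTop (𝓝 0) := by
        apply squeeze_zero_norm (a := fun k => lam k * Mp)
        · intro k
          rw [norm_smul, Real.norm_eq_abs, abs_of_pos (hlampos k)]
          exact mul_le_mul_of_nonneg_left (hMp (η k)) (hlampos k).le
        · simpa using hlam0.mul_const Mp
      simpa using h2.sub h3
    have hSineq : ∀ᶠ k in atTop,
        Sf (lam k • v k) ≤ (((lam k) * (- d (η k)) : ℝ) : EReal) := by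
      filter_upwards [hlamle] with k hk
      have h1 : Sf (lam k • v k) ≤ ((lam k : ℝ) : EReal) * Sf (v k) := by
        have := hSconv (v k) 0 (lam k) (1 - lam k) (hlampos k).le (by linarith) (by ring)
        rwa [smul_zero, add_zero, hS0, mul_zero, add_zero] at this
      have h2 : Sf (v k) ≤ ((- d (η k) : ℝ) : EReal) := ereal_le_neg_of_add_le (hS (η k))
      calc Sf (lam k • v k) ≤ ((lam k : ℝ) : EReal) * Sf (v k) := h1
        _ ≤ ((lam k : ℝ) : EReal) * ((- d (η k) : ℝ) : EReal) :=
            mul_le_mul_of_nonneg_left h2 (by exact_mod_cast (hlampos k).le)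
        _ = (((lam k) * (- d (η k)) : ℝ) : EReal) := by rw [← EReal.coe_mul]
    have hdlim : Tendsto (fun k => ((lam k * (- d (η k)) : ℝ) : EReal)) atTop
        (𝓝 (0 : EReal)) := by
      rw [show (0 : EReal) = ((0 : ℝ) : EReal) by simp]
      rw [EReal.tendsto_coe]
      apply squeeze_zero_norm (a := fun k => lam k * Md)
      · intro k
        rw [Real.norm_eq_abs, abs_mul, abs_of_pos (hlampos k), abs_neg]
        exact mul_le_mul_of_nonneg_left (hMd (η k)) (hlampos k).le
      · simpa using hlam0.mul_const Md
    calc Sf (β • y) ≤ liminf (fun k => Sf (lam k • v k)) atTop := lsc_le_liminf hSlsc hvten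
      _ ≤ liminf (fun k => ((lam k * (- d (η k)) : ℝ) : EReal)) atTop :=
          liminf_le_liminf hSineq
      _ = 0 := hdlim.liminf_eq
  have hy0 : y = 0 := by
    have hmem : y ∈ (⋂ (α : ℝ) (_ : 0 < α), α • Dset) ∩
        {x : J → ℝ | (⨆ (α : ℝ) (_ : 0 < α), (α : EReal) * Sf (α⁻¹ • x)) ≤ 0} := by
      constructor
      · exact Set.mem_iInter₂.2 fun α hα => claimA α hα
      · refine Set.mem_setOf_eq ▸ iSup₂_le fun α hα => ?_
        have h := claimB α⁻¹ (inv_pos.2 hα)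
        calc (α : EReal) * Sf (α⁻¹ • y) ≤ (α : EReal) * 0 :=
              mul_le_mul_of_nonneg_left h (by exact_mod_cast hα.le)
          _ = 0 := mul_zero _
    rw [hrec] at hmem
    exact hmem
  rw [hy0, norm_zero] at hynorm
  norm_num at hynorm

private lemma tendstoInMeasure_comp {P : Measure Ω}
    {f : ℕ → Ω → ℝ} {g : Ω → ℝ} (h : TendstoInMeasure P f atTop g)
    {ns : ℕ → ℕ} (hns : StrictMono ns) :
    TendstoInMeasure P (fun n => f (ns n)) atTop g :=
  fun ε hε => (h ε hε).comp hns.tendsto_atTop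

private lemma measurableSet_conv {G : MeasurableSpace Ω}
    (f : ℕ → Ω → (J → ℝ)) (hf : ∀ k, Measurable[G] (f k)) :
    MeasurableSet[G] {ω | ∃ L, Tendsto (fun k => f k ω) atTop (𝓝 L)} :=
  measurableSet_exists_tendsto hf

private lemma measurable_limit {G : MeasurableSpace Ω}
    (f : ℕ → Ω → (J → ℝ)) (g : Ω → (J → ℝ)) (hf : ∀ k, Measurable[G] (f k))
    (h : ∀ ω, Tendsto (fun k => f k ω) atTop (𝓝 (g ω))) : Measurable[G] g :=
  measurable_of_tendsto_metrizable' atTop hf (tendsto_pi_nhds.2 h)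

private lemma meas_to_strongly {G : MeasurableSpace Ω} {g : Ω → (J → ℝ)}
    (h : Measurable[G] g) : StronglyMeasurable[G] g :=
  h.stronglyMeasurable

omit [Fintype J] in
private lemma meas_indicator {G : MeasurableSpace Ω} {B : Set Ω} (hB : MeasurableSet[G] B)
    {g : Ω → (J → ℝ)} (h : Measurable[G] g) : Measurable[G] (B.indicator g) :=
  h.indicator hB

end AuxLemmas

/-- Theorem 10: if almost surely the recession cone of `Dₜ(ω)` meets the
recession-function sublevel set `{x | Sₜ^∞(x,ω) ≤ 0}` only at the origin, then `C` is
closed in probability. -/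
theorem Cset_closedInProb
    (P : Measure Ω) [IsProbabilityMeasure P] (ℱ : Filtration (Fin (T + 1)) m0)
    (hcomp : ∀ (t : Fin (T + 1)) (s : Set Ω), P s = 0 → MeasurableSet[ℱ t] s)
    (S : CostProcess ℱ J) (D : ConstraintProcess ℱ J)
    (hrec : ∀ t, ∀ᵐ ω ∂P,
      (⋂ (α : ℝ) (_ : 0 < α), α • D.D t ω) ∩
        {x : J → ℝ | (⨆ (α : ℝ) (_ : 0 < α), (α : EReal) * S.S t (α⁻¹ • x) ω) ≤ 0} =
      {0}) :
    ClosedInProb P ℱ (Cset P ℱ S D) := by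
  classical
  intro cs0 hcs0 c hcM hconv
  -- Step 1: pass to a subsequence converging a.e. at every time
  have subseq : ∀ F : Finset (Fin (T+1)), ∃ ns : ℕ → ℕ, StrictMono ns ∧
      ∀ t ∈ F, ∀ᵐ ω ∂P, Filter.Tendsto (fun k => cs0 (ns k) t ω) atTop (nhds (c t ω)) := by
    intro F
    induction F using Finset.induction_on with
    | empty => exact ⟨id, strictMono_id, by simp⟩
    | insert t F ht ih =>
      obtain ⟨ns, hns, hae⟩ := ih
      obtain ⟨ms, hms, hae2⟩ :=
        (tendstoInMeasure_comp (hconv t) hns).exists_seq_tendsto_ae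
      refine ⟨ns ∘ ms, hns.comp hms, fun s hs => ?_⟩
      rcases Finset.mem_insert.1 hs with rfl | hs
      · exact hae2
      · exact (hae s hs).mono fun ω hω => hω.comp hms.tendsto_atTop
  obtain ⟨ns, hns, haeT⟩ := subseq Finset.univ
  set cs : ℕ → Fin (T+1) → Ω → ℝ := fun n => cs0 (ns n) with hcsdef
  have hmem : ∀ n, cs n ∈ Cset P ℱ S D := fun n => hcs0 (ns n)
  have hae : ∀ᵐ ω ∂P, ∀ t, Filter.Tendsto (fun n => cs n t ω) atTop (nhds (c t ω)) :=
    ae_all_iff.2 fun t => haeT t (Finset.mem_univ t)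
  -- the hedging strategies
  set xs : ℕ → Fin (T+1) → Ω → (J → ℝ) := fun n => (hmem n).2.choose with hxsdef
  have hxsspec := fun n => (hmem n).2.choose_spec
  have hxsadapted : ∀ n, Adapted ℱ (xs n) := fun n => (hxsspec n).1
  have hxslast : ∀ n, xs n (Fin.last T) = 0 := fun n => (hxsspec n).2.1
  have hxsae : ∀ᵐ ω ∂P, ∀ n, ∀ t, xs n t ω ∈ D.D t ω ∧
      S.S t (xs n t ω - prevP (xs n) t ω) ω + (cs n t ω : EReal) ≤ 0 :=
    ae_all_iff.2 fun n => (hxsspec n).2.2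
  have hxs_meas : ∀ n (t : Fin (T+1)), Measurable[ℱ t] (xs n t) :=
    fun n t => hxsadapted n t
  have hrec' : ∀ᵐ ω ∂P, ∀ t,
      (⋂ (α : ℝ) (_ : 0 < α), α • D.D t ω) ∩
        {x : J → ℝ | (⨆ (α : ℝ) (_ : 0 < α), (α : EReal) * S.S t (α⁻¹ • x) ω) ≤ 0} =
      {0} := ae_all_iff.2 hrec
  -- Step 2: a.s. boundedness of the strategies, by induction on time, using `bdd_of_rec`
  have hbdd : ∀ᵐ ω ∂P, ∀ t, BddAbove (Set.range fun n => ‖xs n t ω‖) := by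
    filter_upwards [hxsae, hae, hrec'] with ω h1 h2 h3
    have hdb : ∀ t : Fin (T+1), ∃ Md, ∀ n, |cs n t ω| ≤ Md := by
      intro t
      have hb : BddAbove (Set.range fun n => |cs n t ω|) := by
        have : Filter.Tendsto (fun n => |cs n t ω|) atTop (nhds |c t ω|) :=
          (h2 t).abs
        exact this.bddAbove_range
      obtain ⟨M, hM⟩ := hb
      exact ⟨M, fun n => hM ⟨n, rfl⟩⟩
    have H : ∀ m : ℕ, ∀ t : Fin (T+1), (t : ℕ) = m →
        BddAbove (Set.range fun n => ‖xs n t ω‖) := by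
      intro m
      induction m using Nat.strong_induction_on with
      | _ m IH =>
        intro t htm
        have hprevbdd : ∃ Mp, ∀ n, ‖prevP (xs n) t ω‖ ≤ Mp := by
          by_cases h0 : (t : ℕ) = 0
          · refine ⟨0, fun n => ?_⟩
            simp [prevP, h0]
          · have hb := IH (t.1 - 1) (by omega)
              ⟨t.1 - 1, lt_of_le_of_lt (Nat.sub_le _ _) t.isLt⟩ rfl
            obtain ⟨M, hM⟩ := hb
            refine ⟨M, fun n => ?_⟩
            simp only [prevP, h0, if_false]
            exact hM ⟨n, rfl⟩
        exact bdd_of_rec (D.D t ω) (D.closed t ω) (D.convex t ω) (D.zero_mem t ω)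
          (fun v => S.S t v ω)
          (fun x y a b ha hb hab => S.convex t ω x y a b ha hb hab)
          (S.lsc t ω) (S.zero t ω)
          (fun n => xs n t ω) (fun n => prevP (xs n) t ω) (fun n => cs n t ω)
          (fun n => (h1 n t).1) (fun n => (h1 n t).2) hprevbdd (hdb t) (h3 t)
    exact fun t => H t.1 t rfl
  -- Step 3: adapted random subsequences, by induction over time
  set sFin : ℕ → Fin (T+1) := fun s => ⟨min s T, by omega⟩ with hsFin
  have hsFin_mono : ∀ a b : ℕ, a ≤ b → sFin a ≤ sFin b := by
    intro a b h
    simp only [hsFin, Fin.le_def]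
    omega
  have hsFin_eq : ∀ t : Fin (T+1), sFin t.1 = t := by
    intro t
    simp only [hsFin]
    exact Fin.ext (by simp [Nat.min_eq_left (Nat.le_of_lt_succ t.isLt)])
  have KEY : ∀ tm : ℕ, tm ≤ T → ∃ τs : ℕ → ℕ → Ω → ℕ,
      (∀ s, s ≤ tm → ∀ k, Measurable[ℱ (sFin s)] (τs s k)) ∧
      (∀ s, s ≤ tm → ∀ ω, StrictMono fun k => τs s k ω) ∧
      (∀ s, s ≤ tm → ∀ s', s' ≤ s → ∀ ω, ∃ ρ : ℕ → ℕ, StrictMono ρ ∧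
        ∀ k, τs s k ω = τs s' (ρ k) ω) ∧
      (∀ s, s ≤ tm → ∀ ω, BddAbove (Set.range fun n => ‖xs n (sFin s) ω‖) →
        ∃ L, Filter.Tendsto (fun k => xs (τs s k ω) (sFin s) ω) atTop (nhds L)) := by
    intro tm
    induction tm with
    | zero =>
      intro _
      obtain ⟨σ, hm, hsm, hcv⟩ := exists_random_subseq_pi (fun n => xs n (sFin 0))
        (fun n => hxs_meas n (sFin 0))
      refine ⟨fun _ => σ, fun s hs k => ?_, fun s hs ω => hsm ω,
        fun s hs s' hs' ω => ⟨id, strictMono_id, fun k => rfl⟩, fun s hs ω hb => ?_⟩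
      · interval_cases s
        exact hm k
      · interval_cases s
        exact hcv ω hb
    | succ tm ih =>
      intro htm
      obtain ⟨τs, hm, hsm, hcompat, hcv⟩ := ih (by omega)
      have houter : ∀ n, Measurable[ℱ (sFin (tm+1))] (τs tm n) := fun n =>
        (hm tm le_rfl n).mono (ℱ.mono (hsFin_mono tm (tm+1) (by omega))) le_rfl
      obtain ⟨σ, hm', hsm', hcv'⟩ := exists_random_subseq_pi
        (fun n ω => xs (τs tm n ω) (sFin (tm+1)) ω)
        (fun n => measurable_comp_nat (houter n)
          (fun m => hxs_meas m (sFin (tm+1))))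
      set τs' : ℕ → ℕ → Ω → ℕ := fun s =>
        if s = tm + 1 then (fun k ω => τs tm (σ k ω) ω) else τs s with hτs'
      have heqnew : ∀ k ω, τs' (tm+1) k ω = τs tm (σ k ω) ω := by
        intro k ω; simp [hτs']
      have heqold : ∀ s, s ≤ tm → τs' s = τs s := by
        intro s hs; simp [hτs', Nat.ne_of_lt (by omega : s < tm + 1)]
      refine ⟨τs', ?_, ?_, ?_, ?_⟩
      · intro s hs k
        rcases Nat.lt_succ_iff_lt_or_eq.1 (Nat.lt_succ_of_le hs) with h | rfl
        · rw [heqold s (by omega)]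
          exact hm s (by omega) k
        · have hfun : τs' (tm+1) k = fun ω => τs tm (σ k ω) ω := by
            funext ω; exact heqnew k ω
          rw [hfun]
          exact measurable_comp_nat (hm' k) houter
      · intro s hs ω
        rcases Nat.lt_succ_iff_lt_or_eq.1 (Nat.lt_succ_of_le hs) with h | rfl
        · rw [heqold s (by omega)]
          exact hsm s (by omega) ω
        · have hcongr : (fun k => τs' (tm+1) k ω) = fun k => τs tm (σ k ω) ω := by
            funext k; exact heqnew k ω
          rw [hcongr]
          exact (hsm tm le_rfl ω).comp (hsm' ω)
      · intro s hs s' hs' ω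
        rcases Nat.lt_succ_iff_lt_or_eq.1 (Nat.lt_succ_of_le hs) with h | rfl
        · obtain ⟨ρ, hρ, hρeq⟩ := hcompat s (by omega) s' (by omega) ω
          refine ⟨ρ, hρ, fun k => ?_⟩
          rw [heqold s (by omega), heqold s' (by omega)]
          exact hρeq k
        · rcases Nat.lt_succ_iff_lt_or_eq.1 (Nat.lt_succ_of_le hs') with h' | rfl
          · obtain ⟨ρ, hρ, hρeq⟩ := hcompat tm le_rfl s' (by omega) ω
            refine ⟨fun k => ρ (σ k ω), hρ.comp (hsm' ω), fun k => ?_⟩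
            rw [heqnew k ω, heqold s' (by omega)]
            exact hρeq (σ k ω)
          · exact ⟨id, strictMono_id, fun k => rfl⟩
      · intro s hs ω hb
        rcases Nat.lt_succ_iff_lt_or_eq.1 (Nat.lt_succ_of_le hs) with h | rfl
        · have hcongr : (fun k => xs (τs' s k ω) (sFin s) ω)
              = fun k => xs (τs s k ω) (sFin s) ω := by
            funext k; rw [heqold s (by omega)]
          rw [hcongr]
          exact hcv s (by omega) ω hb
        · have hb2 : BddAbove (Set.range fun n => ‖xs (τs tm n ω) (sFin (tm+1)) ω‖) := by
            refine hb.mono ?_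
            rintro v ⟨n, rfl⟩
            exact ⟨τs tm n ω, rfl⟩
          obtain ⟨L, hL⟩ := hcv' ω hb2
          refine ⟨L, ?_⟩
          have hcongr : (fun k => xs (τs' (tm+1) k ω) (sFin (tm+1)) ω)
              = fun k => xs (τs tm (σ k ω) ω) (sFin (tm+1)) ω := by
            funext k; rw [heqnew k ω]
          rw [hcongr]
          exact hL
  obtain ⟨τs, hτmeas, hτmono, hτcompat, hτconv⟩ := KEY T le_rfl
  -- The candidate limiting strategy
  set g : Fin (T+1) → ℕ → Ω → (J → ℝ) := fun t k ω => xs (τs t.1 k ω) t ω with hgdef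
  have hgmeas : ∀ (t : Fin (T+1)) k, Measurable[ℱ t] (g t k) := by
    intro t k
    have h1 : Measurable[ℱ (sFin t.1)] (τs t.1 k) :=
      hτmeas t.1 (Nat.le_of_lt_succ t.isLt) k
    rw [hsFin_eq t] at h1
    exact measurable_comp_nat h1 (fun n => hxs_meas n t)
  set B : Fin (T+1) → Set Ω := fun t =>
    {ω | ∃ L, Filter.Tendsto (fun k => g t k ω) atTop (nhds L)} with hBdef
  have hBmeas : ∀ t, MeasurableSet[ℱ t] (B t) := fun t =>
    measurableSet_conv (g t) (fun k => hgmeas t k)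
  set x : Fin (T+1) → Ω → (J → ℝ) := fun t ω =>
    limUnder atTop (fun k => (B t).indicator (g t k) ω) with hxdef
  have hBx : ∀ t ω, Filter.Tendsto (fun k => (B t).indicator (g t k) ω) atTop
      (nhds (x t ω)) := by
    intro t ω
    by_cases hω : ω ∈ B t
    · obtain ⟨L, hL⟩ := id hω
      have h1 : (fun k => (B t).indicator (g t k) ω) = fun k => g t k ω :=
        funext fun k => Set.indicator_of_mem hω _
      have h2 : x t ω = L := by
        rw [hxdef]
        simp only []
        rw [h1]
        exact hL.limUnder_eq
      rw [h2, h1]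
      exact hL
    · have h1 : (fun k => (B t).indicator (g t k) ω) = fun _ => (0 : J → ℝ) :=
        funext fun k => Set.indicator_of_notMem hω _
      have h2 : x t ω = 0 := by
        rw [hxdef]
        simp only []
        rw [h1]
        exact tendsto_const_nhds.limUnder_eq
      rw [h2, h1]
      exact tendsto_const_nhds
  have hxadapted : Adapted ℱ x := by
    intro t
    have hmeas : Measurable[ℱ t] (x t) :=
      measurable_limit (fun k => (B t).indicator (g t k)) (x t)
        (fun k => meas_indicator (hBmeas t) (hgmeas t k))
        (fun ω => hBx t ω)
    exact hmeas
  have hxlast : x (Fin.last T) = 0 := by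
    funext ω
    have h1 : ∀ k, (B (Fin.last T)).indicator (g (Fin.last T) k) ω = 0 := by
      intro k
      have hg0 : g (Fin.last T) k = fun ω' => 0 := by
        funext ω'
        simp only [hgdef]
        rw [hxslast (τs (Fin.last T).1 k ω')]
        rfl
      rw [hg0]
      simp [Set.indicator_apply]
    have h2 : x (Fin.last T) ω = 0 := by
      rw [hxdef]
      simp only []
      rw [funext h1]
      exact tendsto_const_nhds.limUnder_eq
    simpa using h2
  refine ⟨hcM, x, hxadapted, hxlast, ?_⟩
  filter_upwards [hxsae, hae, hbdd] with ω h1 h2 h4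
  have hBmem : ∀ t, ω ∈ B t := by
    intro t
    have hb : BddAbove (Set.range fun n => ‖xs n (sFin t.1) ω‖) := by
      rw [hsFin_eq t]; exact h4 t
    have := hτconv t.1 (Nat.le_of_lt_succ t.isLt) ω hb
    rw [hsFin_eq t] at this
    exact this
  have hcommon : ∀ t : Fin (T+1),
      Filter.Tendsto (fun k => xs (τs T k ω) t ω) atTop (nhds (x t ω)) := by
    intro t
    obtain ⟨ρ, hρ, hρeq⟩ := hτcompat T le_rfl t.1 (Nat.le_of_lt_succ t.isLt) ω
    have hgt : Filter.Tendsto (fun k => g t k ω) atTop (nhds (x t ω)) := by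
      have h := hBx t ω
      have heq : (fun k => (B t).indicator (g t k) ω) = fun k => g t k ω :=
        funext fun k => Set.indicator_of_mem (hBmem t) _
      rwa [heq] at h
    have h := hgt.comp hρ.tendsto_atTop
    have heq : ((fun k => g t k ω) ∘ ρ) = fun k => xs (τs T k ω) t ω := by
      funext k
      simp only [Function.comp, hgdef]
      rw [← hρeq k]
    rwa [heq] at h
  intro t
  constructor
  · exact (D.closed t ω).mem_of_tendsto (hcommon t)
      (Filter.Eventually.of_forall fun k => (h1 (τs T k ω) t).1)
  · have hprevten : Filter.Tendsto (fun k => prevP (xs (τs T k ω)) t ω) atTop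
        (nhds (prevP x t ω)) := by
      by_cases h0 : (t : ℕ) = 0
      · simp only [prevP, h0, if_true]
        exact tendsto_const_nhds
      · simp only [prevP, h0, if_false]
        exact hcommon _
    have hvten : Filter.Tendsto
        (fun k => xs (τs T k ω) t ω - prevP (xs (τs T k ω)) t ω) atTop
        (nhds (x t ω - prevP x t ω)) := (hcommon t).sub hprevten
    have hτtop : Filter.Tendsto (fun k => τs T k ω) atTop atTop :=
      (hτmono T le_rfl ω).tendsto_atTop
    have hclim : Filter.Tendsto (fun k => cs (τs T k ω) t ω) atTop (nhds (c t ω)) :=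
      (h2 t).comp hτtop
    have hSle : S.S t (x t ω - prevP x t ω) ω ≤ ((- c t ω : ℝ) : EReal) := by
      calc S.S t (x t ω - prevP x t ω) ω
          ≤ liminf (fun k =>
              S.S t (xs (τs T k ω) t ω - prevP (xs (τs T k ω)) t ω) ω) atTop :=
            lsc_le_liminf (S.lsc t ω) hvten
        _ ≤ liminf (fun k => ((- cs (τs T k ω) t ω : ℝ) : EReal)) atTop :=
            liminf_le_liminf (Filter.Eventually.of_forall fun k =>
              ereal_le_neg_of_add_le (h1 (τs T k ω) t).2)
        _ = ((- c t ω : ℝ) : EReal) :=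
            (EReal.tendsto_coe.2 hclim.neg).liminf_eq
    have h5 := add_le_add_left hSle ((c t ω : ℝ) : EReal)
    rwa [← EReal.coe_add, neg_add_cancel, EReal.coe_zero] at h5

end
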